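/- If a locally integrable function f on the open unit disc satisfies both the BWMO condition and the VWMO condition, then lim_{|z|→1} (1/|B(z)|) · sup{ |∫_{B(z̃,ζ)} (f(ξ) − f̂(z)) dA(ξ)| : z̃, ζ ∈ B(z), z̃ ≾ ζ } = 0. -/

import Mathlib

open MeasureTheory Set

noncomputable section

/-- The normalized area measure on the plane: planar Lebesgue measure divided by `π`. -/
def dA : Measure ℂ := (ENNReal.ofReal Real.pi)⁻¹ • volume

/-- The open unit disc `𝔻`. -/
def unitDisc : Set ℂ := {z : ℂ | ‖z‖ < 1}

/-- The argument `θ` of `z`, normalized to lie in `[0, 2π)`. -/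
def theta (z : ℂ) : ℝ := toIcoMod Real.two_pi_pos 0 (Complex.arg z)

/-- The angle of `ζ`, normalized to lie in `[theta z, theta z + 2π)`;
for `ζ ∈ B(z)` this is the angle `θ̃ ∈ [θ, θ + π(1-r)]` of the paper's convention. -/
def angFrom (z ζ : ℂ) : ℝ := toIcoMod Real.two_pi_pos (theta z) (Complex.arg ζ)

/-- The polar rectangle `{ρ e^{iφ} : r₁ ≤ ρ ≤ r₂, φ₁ ≤ φ ≤ φ₂}`. -/
def polarRect (r₁ r₂ φ₁ φ₂ : ℝ) : Set ℂ :=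
  {w : ℂ | ∃ ρ φ : ℝ, r₁ ≤ ρ ∧ ρ ≤ r₂ ∧ φ₁ ≤ φ ∧ φ ≤ φ₂ ∧
    w = (ρ : ℂ) * Complex.exp ((φ : ℂ) * Complex.I)}

/-- The set `B(z)` for `z = r e^{iθ} ∈ 𝔻`. -/
def Bz (z : ℂ) : Set ℂ :=
  polarRect ‖z‖ (1 - (1 - ‖z‖) / 2) (theta z) (theta z + Real.pi * (1 - ‖z‖))

/-- The set `B(z, ζ)` for `ζ ∈ B(z)`. -/
def Bzz (z ζ : ℂ) : Set ℂ := polarRect ‖z‖ ‖ζ‖ (theta z) (angFrom z ζ)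

/-- The set `B(ζ₁, ζ₂)` for points `ζ₁ ≾ ζ₂` of `B(z)`. -/
def Bsub (z ζ₁ ζ₂ : ℂ) : Set ℂ := polarRect ‖ζ₁‖ ‖ζ₂‖ (angFrom z ζ₁) (angFrom z ζ₂)

/-- The relation `ζ₁ ≾ ζ₂` for points of `B(z)`: `ρ₁ ≤ ρ₂` and `φ₁ ≤ φ₂`. -/
def precSim (z ζ₁ ζ₂ : ℂ) : Prop := ‖ζ₁‖ ≤ ‖ζ₂‖ ∧ angFrom z ζ₁ ≤ angFrom z ζ₂

/-- The average `f̂_K = (1/|K|) ∫_K f dA` of `f` over a set `K`. -/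
def avgOn (f : ℂ → ℂ) (K : Set ℂ) : ℂ := ((dA K).toReal)⁻¹ • ∫ w in K, f w ∂dA

/-- The average function `f̂(z) = f̂_{B(z)}`. -/
def avg (f : ℂ → ℂ) (z : ℂ) : ℂ := avgOn f (Bz z)

/-- The quantity `(1/|B(z)|) |∫_{B(z,ζ)} (f(ξ) - f̂(z)) dA(ξ)|`. -/
def wQuot (f : ℂ → ℂ) (z ζ : ℂ) : ℝ :=
  ((dA (Bz z)).toReal)⁻¹ * ‖∫ ξ in Bzz z ζ, (f ξ - avg f z) ∂dA‖

/-- The BWMO condition: `‖f‖_BWMO < ∞`. -/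
def IsBWMO (f : ℂ → ℂ) : Prop := ∃ C : ℝ, ∀ z ∈ unitDisc, ∀ ζ ∈ Bz z, wQuot f z ζ ≤ C

/-- The BWMO seminorm `‖f‖_BWMO`. -/
def bwmoNorm (f : ℂ → ℂ) : ℝ :=
  sSup {c : ℝ | ∃ z ∈ unitDisc, ∃ ζ ∈ Bz z, c = wQuot f z ζ}

/-- The VWMO condition:
`(1/|B(z)|) sup_{ζ ∈ B(z)} |∫_{B(z,ζ)} (f - f̂(z)) dA| → 0` as `|z| → 1`. -/
def IsVWMO (f : ℂ → ℂ) : Prop :=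
  ∀ ε > (0:ℝ), ∃ r₀ < (1:ℝ), ∀ z ∈ unitDisc, r₀ ≤ ‖z‖ → ∀ ζ ∈ Bz z, wQuot f z ζ ≤ ε

/-- The Bergman-metric disc `D(z,1)` of radius `1` centered at `z`. -/
def Dball (z : ℂ) : Set ℂ :=
  {w : ℂ | ‖w‖ < 1 ∧ ‖(z - w) / (1 - (starRingEnd ℂ) w * z)‖ < Real.tanh 1}

/-- The hyperbolic average `f̂₁(z) = (1/|D(z,1)|) ∫_{D(z,1)} f dA` of a real-valued `f`. -/
def avg1 (f : ℂ → ℝ) (z : ℂ) : ℝ := ((dA (Dball z)).toReal)⁻¹ * ∫ w in Dball z, f w ∂dA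

/-- The mean oscillation `(1/|D(z,1)|) ∫_{D(z,1)} |f - f̂₁(z)| dA` of a real-valued `f`. -/
def meanOsc1 (f : ℂ → ℝ) (z : ℂ) : ℝ :=
  ((dA (Dball z)).toReal)⁻¹ * ∫ ξ in Dball z, |f ξ - avg1 f z| ∂dA

/-- The Berezin transform `f̃(z) = ∫_𝔻 f(w) |k_z(w)|² dA(w)`,
where `k_z(w) = (1-|z|²)/(1-w z̄)²`. -/
def berezin (f : ℂ → ℂ) (z : ℂ) : ℂ :=
  ∫ w in unitDisc, f w * ((((1 - ‖z‖ ^ 2) ^ 2 / ‖1 - w * (starRingEnd ℂ) z‖ ^ 4 : ℝ)) : ℂ) ∂dA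

/-- The example symbol of Section 4:
`f(r e^{iθ}) = (1/(r (1-r)^{b-β})) sin(1/(1-r)^b)` for `r ≥ 1/2`, and `1` for `r < 1/2`. -/
def fEx (b β : ℝ) (z : ℂ) : ℝ :=
  if ‖z‖ < 1 / 2 then 1
  else (1 / (‖z‖ * (1 - ‖z‖) ^ (b - β))) * Real.sin (1 / (1 - ‖z‖) ^ b)

end

section Helpers

open Complex MeasureTheory Set

lemma norm_rot (ρ φ : ℝ) (hρ : 0 ≤ ρ) : ‖(ρ:ℂ) * Complex.exp ((φ:ℂ) * Complex.I)‖ = ρ := by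
  rw [norm_mul, Complex.norm_exp_ofReal_mul_I, mul_one, Complex.norm_real,
    Real.norm_of_nonneg hρ]

lemma exp_inj (x y : ℝ)
    (h : Complex.exp ((x:ℂ) * Complex.I) = Complex.exp ((y:ℂ) * Complex.I)) :
    ∃ k : ℤ, x = y + k * (2 * Real.pi) := by
  obtain ⟨n, hn⟩ := Complex.exp_eq_exp_iff_exists_int.mp h
  refine ⟨n, ?_⟩
  have h2 : ((x - (y + n * (2 * Real.pi)) : ℝ) : ℂ) * Complex.I = 0 := by
    push_cast
    linear_combination hn
  have h3 : ((x - (y + n * (2 * Real.pi)) : ℝ) : ℂ) = 0 := by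
    rcases mul_eq_zero.mp h2 with h' | h'
    · exact h'
    · exact absurd h' Complex.I_ne_zero
  have h4 : x - (y + n * (2 * Real.pi)) = 0 := by exact_mod_cast h3
  linarith

lemma angFrom_rot (z : ℂ) (ρ φ : ℝ) (hρ : 0 < ρ) (h1 : theta z ≤ φ)
    (h2 : φ < theta z + 2 * Real.pi) :
    angFrom z ((ρ:ℂ) * Complex.exp ((φ:ℂ) * Complex.I)) = φ := by
  set w := (ρ:ℂ) * Complex.exp ((φ:ℂ) * Complex.I) with hw
  have hnw : ‖w‖ = ρ := norm_rot ρ φ hρ.le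
  have habs : ((‖w‖ : ℝ) : ℂ) = (ρ : ℂ) := by
    rw [hnw]
  have harg := Complex.norm_mul_exp_arg_mul_I w
  rw [habs] at harg
  have hexp : Complex.exp ((w.arg : ℂ) * Complex.I) = Complex.exp ((φ:ℂ) * Complex.I) :=
    mul_left_cancel₀ (by exact_mod_cast hρ.ne') (harg.trans hw)
  obtain ⟨k, hk⟩ := exp_inj _ _ hexp
  unfold angFrom
  rw [hk]
  have hsm : φ + (k:ℝ) * (2 * Real.pi) = φ + k • (2 * Real.pi) := by
    simp [zsmul_eq_mul]
  rw [hsm, toIcoMod_add_zsmul, toIcoMod_eq_self]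
  exact ⟨h1, h2⟩

lemma mem_polarRect_props {r₁ r₂ φ₁ φ₂ : ℝ} {z w : ℂ} (hr : 0 < r₁)
    (hφ1 : theta z ≤ φ₁) (hφ : φ₂ < theta z + 2 * Real.pi)
    (hw : w ∈ polarRect r₁ r₂ φ₁ φ₂) :
    r₁ ≤ ‖w‖ ∧ ‖w‖ ≤ r₂ ∧ φ₁ ≤ angFrom z w ∧ angFrom z w ≤ φ₂ ∧
      w = (‖w‖ : ℂ) * Complex.exp ((angFrom z w : ℂ) * Complex.I) := by
  obtain ⟨ρ, φ, h1, h2, h3, h4, h5⟩ := hw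
  have hρ : 0 < ρ := lt_of_lt_of_le hr h1
  have hnw : ‖w‖ = ρ := by rw [h5]; exact norm_rot ρ φ hρ.le
  have hang : angFrom z w = φ := by
    rw [h5]; exact angFrom_rot z ρ φ hρ (le_trans hφ1 h3) (lt_of_le_of_lt h4 hφ)
  refine ⟨by rw [hnw]; exact h1, by rw [hnw]; exact h2,
    by rw [hang]; exact h3, by rw [hang]; exact h4, by rw [hnw, hang]; exact h5⟩

lemma polarRect_mono {a b c d a' b' c' d' : ℝ} (h1 : a' ≤ a) (h2 : b ≤ b')
    (h3 : c' ≤ c) (h4 : d ≤ d') : polarRect a b c d ⊆ polarRect a' b' c' d' := by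
  rintro w ⟨ρ, φ, p1, p2, p3, p4, p5⟩
  exact ⟨ρ, φ, le_trans h1 p1, le_trans p2 h2, le_trans h3 p3, le_trans p4 h4, p5⟩

lemma polarRect_eq_image (r₁ r₂ φ₁ φ₂ : ℝ) :
    polarRect r₁ r₂ φ₁ φ₂ =
      (fun p : ℝ × ℝ => (p.1 : ℂ) * Complex.exp ((p.2 : ℂ) * Complex.I)) ''
        (Set.Icc r₁ r₂ ×ˢ Set.Icc φ₁ φ₂) := by
  ext w
  constructor
  · rintro ⟨ρ, φ, h1, h2, h3, h4, h5⟩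
    exact ⟨(ρ, φ), ⟨⟨h1, h2⟩, ⟨h3, h4⟩⟩, h5.symm⟩
  · rintro ⟨⟨ρ, φ⟩, ⟨⟨h1, h2⟩, ⟨h3, h4⟩⟩, h5⟩
    exact ⟨ρ, φ, h1, h2, h3, h4, h5.symm⟩

lemma isCompact_polarRect (r₁ r₂ φ₁ φ₂ : ℝ) : IsCompact (polarRect r₁ r₂ φ₁ φ₂) := by
  rw [polarRect_eq_image]
  exact (isCompact_Icc.prod isCompact_Icc).image (by fun_prop)

lemma measurableSet_polarRect (r₁ r₂ φ₁ φ₂ : ℝ) : MeasurableSet (polarRect r₁ r₂ φ₁ φ₂) :=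
  (isCompact_polarRect r₁ r₂ φ₁ φ₂).measurableSet

lemma dA_null {s : Set ℂ} (h : volume s = 0) : dA s = 0 := by
  simp [dA, Measure.smul_apply, h]

lemma sphere_null (c : ℝ) : dA {w : ℂ | ‖w‖ = c} = 0 := by
  have h : {w : ℂ | ‖w‖ = c} = Metric.sphere (0:ℂ) c := by
    ext w; simp [Metric.mem_sphere, dist_zero_right]
  rw [h]
  exact dA_null (MeasureTheory.Measure.addHaar_sphere volume 0 c)

lemma ray_null (φ : ℝ) :
    dA {w : ℂ | ∃ t : ℝ, w = (t:ℂ) * Complex.exp ((φ:ℂ) * Complex.I)} = 0 := by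
  set e : ℂ := Complex.exp ((φ:ℂ) * Complex.I) with he'
  have he : e ≠ 0 := Complex.exp_ne_zero _
  have hsub : {w : ℂ | ∃ t : ℝ, w = (t:ℂ) * e} ⊆
      (Submodule.span ℝ ({e} : Set ℂ) : Submodule ℝ ℂ) := by
    rintro w ⟨t, rfl⟩
    have h : (t:ℂ) * e = t • e := Complex.real_smul.symm
    rw [h]
    exact Submodule.smul_mem _ t (Submodule.mem_span_singleton_self e)
  have hne : (Submodule.span ℝ ({e} : Set ℂ) : Submodule ℝ ℂ) ≠ ⊤ := by
    intro htop
    have hmem : Complex.I * e ∈ Submodule.span ℝ ({e} : Set ℂ) := htop ▸ Submodule.mem_top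
    obtain ⟨t, ht⟩ := Submodule.mem_span_singleton.mp hmem
    rw [Complex.real_smul] at ht
    have heq : (t:ℂ) = Complex.I := mul_right_cancel₀ he ht
    have := congrArg Complex.im heq
    simp at this
  exact measure_mono_null hsub (dA_null (MeasureTheory.Measure.addHaar_submodule volume _ hne))

lemma integral_split (g : ℂ → ℂ) {s t u : Set ℂ} (hu : u = s ∪ t)
    (hst : dA (s ∩ t) = 0) (htm : MeasurableSet t)
    (hgs : IntegrableOn g s dA) (hgt : IntegrableOn g t dA) :
    ∫ ξ in u, g ξ ∂dA = (∫ ξ in s, g ξ ∂dA) + ∫ ξ in t, g ξ ∂dA := by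
  rw [hu]
  exact integral_union_ae hst htm.nullMeasurableSet hgs hgt

end Helpers

/-- If a locally integrable `f` on `𝔻` satisfies both the BWMO and the VWMO
conditions, then
`(1/|B(z)|) sup { |∫_{B(z̃,ζ)} (f(ξ) - f̂(z)) dA(ξ)| : z̃, ζ ∈ B(z), z̃ ≾ ζ } → 0`
as `|z| → 1`. -/
theorem bwmo_vwmo_subrect_vanishing (f : ℂ → ℂ)
    (hf : MeasureTheory.LocallyIntegrableOn f unitDisc dA)
    (hbwmo : IsBWMO f) (hvwmo : IsVWMO f) :
    ∀ ε > (0:ℝ), ∃ r₀ < (1:ℝ), ∀ z ∈ unitDisc, r₀ ≤ ‖z‖ →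
      ∀ ztil ∈ Bz z, ∀ ζ ∈ Bz z, precSim z ztil ζ →
        ((dA (Bz z)).toReal)⁻¹ * ‖∫ ξ in Bsub z ztil ζ, (f ξ - avg f z) ∂dA‖ ≤ ε := by
  intro ε hε
  obtain ⟨r₁, hr₁lt, hr₁⟩ := hvwmo (ε/4) (by linarith)
  refine ⟨max r₁ (1/2), max_lt hr₁lt (by norm_num), ?_⟩
  intro z hz hrz ztil hztil ζ hζ hprec
  have hπ := Real.pi_pos
  have hz1 : ‖z‖ < 1 := hz
  have hzhalf : (1:ℝ)/2 ≤ ‖z‖ := le_trans (le_max_right _ _) hrz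
  have hz0 : 0 < ‖z‖ := by linarith
  have hΘlt : theta z + Real.pi * (1 - ‖z‖) < theta z + 2 * Real.pi := by nlinarith
  have hBz : Bz z = polarRect ‖z‖ (1 - (1 - ‖z‖)/2)
      (theta z) (theta z + Real.pi * (1 - ‖z‖)) := rfl
  obtain ⟨ha1, ha2, ha3, ha4, -⟩ := mem_polarRect_props hz0 le_rfl hΘlt hztil
  obtain ⟨hb1, hb2, hb3, hb4, -⟩ := mem_polarRect_props hz0 le_rfl hΘlt hζ
  obtain ⟨hp1, hp2⟩ := hprec
  -- key bound from VWMO at each corner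
  have key : ∀ ρ φ : ℝ, ‖z‖ ≤ ρ → ρ ≤ 1 - (1 - ‖z‖)/2 → theta z ≤ φ →
      φ ≤ theta z + Real.pi * (1 - ‖z‖) →
      ((dA (Bz z)).toReal)⁻¹ * ‖∫ ξ in polarRect ‖z‖ ρ (theta z) φ, (f ξ - avg f z) ∂dA‖
        ≤ ε/4 := by
    intro ρ φ h1 h2 h3 h4
    have hc : (ρ:ℂ) * Complex.exp ((φ:ℂ) * Complex.I) ∈ Bz z :=
      ⟨ρ, φ, h1, h2, h3, h4, rfl⟩
    have hq := hr₁ z hz (le_trans (le_max_left _ _) hrz) _ hc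
    have hn := norm_rot ρ φ (le_trans hz0.le h1)
    have hang := angFrom_rot z ρ φ (lt_of_lt_of_le hz0 h1) h3 (lt_of_le_of_lt h4 hΘlt)
    unfold wQuot Bzz at hq
    rw [hn, hang] at hq
    exact hq
  -- integrability
  have hBzsub : Bz z ⊆ unitDisc := by
    intro w hw
    obtain ⟨-, h2, -, -, -⟩ := mem_polarRect_props hz0 le_rfl hΘlt hw
    show ‖w‖ < 1
    linarith
  have hfint : IntegrableOn f (Bz z) dA :=
    hf.integrableOn_compact_subset hBzsub (isCompact_polarRect _ _ _ _)
  have hdAfin : dA (Bz z) < ⊤ := by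
    have hc : volume (Bz z) < ⊤ := by
      rw [hBz]; exact (isCompact_polarRect _ _ _ _).measure_lt_top
    rw [dA, Measure.smul_apply, smul_eq_mul]
    exact ENNReal.mul_lt_top (by simp [Real.pi_pos]) hc
  have hgint : IntegrableOn (fun ξ => f ξ - avg f z) (Bz z) dA :=
    hfint.sub (integrableOn_const hdAfin.ne)
  have subInt : ∀ a b c d : ℝ, ‖z‖ ≤ a → b ≤ 1 - (1 - ‖z‖)/2 → theta z ≤ c →
      d ≤ theta z + Real.pi * (1 - ‖z‖) →
      IntegrableOn (fun ξ => f ξ - avg f z) (polarRect a b c d) dA :=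
    fun a b c d h1 h2 h3 h4 => hgint.mono_set (polarRect_mono h1 h2 h3 h4)
  -- splitting lemmas
  have radial_eq : ∀ a m b c d : ℝ, a ≤ m → m ≤ b →
      polarRect a b c d = polarRect a m c d ∪ polarRect m b c d := by
    intro a m b c d h1 h2
    apply Set.Subset.antisymm
    · rintro w ⟨ρ, φ, p1, p2, p3, p4, p5⟩
      rcases le_total ρ m with h | h
      · exact Or.inl ⟨ρ, φ, p1, h, p3, p4, p5⟩
      · exact Or.inr ⟨ρ, φ, h, p2, p3, p4, p5⟩
    · rintro w (⟨ρ, φ, p1, p2, p3, p4, p5⟩ | ⟨ρ, φ, p1, p2, p3, p4, p5⟩)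
      · exact ⟨ρ, φ, p1, le_trans p2 h2, p3, p4, p5⟩
      · exact ⟨ρ, φ, le_trans h1 p1, p2, p3, p4, p5⟩
  have angular_eq : ∀ a b c m d : ℝ, c ≤ m → m ≤ d →
      polarRect a b c d = polarRect a b c m ∪ polarRect a b m d := by
    intro a b c m d h1 h2
    apply Set.Subset.antisymm
    · rintro w ⟨ρ, φ, p1, p2, p3, p4, p5⟩
      rcases le_total φ m with h | h
      · exact Or.inl ⟨ρ, φ, p1, p2, p3, h, p5⟩
      · exact Or.inr ⟨ρ, φ, p1, p2, h, p4, p5⟩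
    · rintro w (⟨ρ, φ, p1, p2, p3, p4, p5⟩ | ⟨ρ, φ, p1, p2, p3, p4, p5⟩)
      · exact ⟨ρ, φ, p1, p2, p3, le_trans p4 h2, p5⟩
      · exact ⟨ρ, φ, p1, p2, le_trans h1 p3, p4, p5⟩
  have radial_null : ∀ a m b c d : ℝ, 0 < a → a ≤ m →
      dA (polarRect a m c d ∩ polarRect m b c d) = 0 := by
    intro a m b c d ha ham
    apply measure_mono_null _ (sphere_null m)
    rintro w ⟨⟨ρ, φ, p1, p2, p3, p4, p5⟩, ⟨ρ', φ', q1, q2, q3, q4, q5⟩⟩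
    have h1 : ‖w‖ = ρ := by rw [p5]; exact norm_rot _ _ (le_trans ha.le p1)
    have h2 : ‖w‖ = ρ' := by rw [q5]; exact norm_rot _ _ (le_trans (ha.le.trans ham) q1)
    show ‖w‖ = m
    exact le_antisymm (by rw [h1]; exact p2) (by rw [h2]; exact q1)
  have angular_null : ∀ a b c m d : ℝ, 0 < a → theta z ≤ c →
      d ≤ theta z + Real.pi * (1 - ‖z‖) → c ≤ m → m ≤ d →
      dA (polarRect a b c m ∩ polarRect a b m d) = 0 := by
    intro a b c m d ha hc hd hcm hmd
    apply measure_mono_null _ (ray_null m)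
    rintro w ⟨⟨ρ, φ, p1, p2, p3, p4, p5⟩, ⟨ρ', φ', q1, q2, q3, q4, q5⟩⟩
    have hρ : 0 < ρ := lt_of_lt_of_le ha p1
    have hρ' : 0 < ρ' := lt_of_lt_of_le ha q1
    have h1 : ‖w‖ = ρ := by rw [p5]; exact norm_rot _ _ hρ.le
    have h2 : ‖w‖ = ρ' := by rw [q5]; exact norm_rot _ _ hρ'.le
    have hρρ : ρ = ρ' := h1.symm.trans h2
    have hexp : Complex.exp ((φ:ℂ) * Complex.I) = Complex.exp ((φ':ℂ) * Complex.I) := by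
      have heq := p5.symm.trans q5
      rw [← hρρ] at heq
      exact mul_left_cancel₀ (by exact_mod_cast hρ.ne') heq
    obtain ⟨k, hk⟩ := exp_inj _ _ hexp
    have hb1 : theta z ≤ φ := le_trans hc p3
    have hb2 : φ' ≤ theta z + Real.pi * (1 - ‖z‖) := le_trans q4 hd
    have hφm' : φ ≤ φ' := le_trans p4 q3
    have hk0 : k = 0 := by
      rcases lt_trichotomy k 0 with h | h | h
      · exfalso
        have hkr : (k:ℝ) ≤ -1 := by exact_mod_cast (by omega : k ≤ -1)
        nlinarith
      · exact h
      · exfalso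
        have hkr : (1:ℝ) ≤ (k:ℝ) := by exact_mod_cast h
        nlinarith
    have hφφ : φ = φ' := by rw [hk0] at hk; push_cast at hk; linarith
    have hφm : φ = m := le_antisymm p4 (by rw [hφφ]; exact q3)
    exact ⟨ρ, by rw [p5, hφm]⟩
  -- the decomposition
  have hS1 := integral_split (fun ξ => f ξ - avg f z)
    (radial_eq ‖z‖ ‖ztil‖ ‖ζ‖ (theta z) (angFrom z ζ) ha1 hp1)
    (radial_null ‖z‖ ‖ztil‖ ‖ζ‖ (theta z) (angFrom z ζ) hz0 ha1)
    (measurableSet_polarRect _ _ _ _)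
    (subInt _ _ _ _ le_rfl (le_trans hp1 hb2) le_rfl hb4)
    (subInt _ _ _ _ ha1 hb2 le_rfl hb4)
  have hS2 := integral_split (fun ξ => f ξ - avg f z)
    (angular_eq ‖ztil‖ ‖ζ‖ (theta z) (angFrom z ztil) (angFrom z ζ) ha3 hp2)
    (angular_null ‖ztil‖ ‖ζ‖ (theta z) (angFrom z ztil) (angFrom z ζ)
      (lt_of_lt_of_le hz0 ha1) le_rfl hb4 ha3 hp2)
    (measurableSet_polarRect _ _ _ _)
    (subInt _ _ _ _ ha1 hb2 le_rfl ha4)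
    (subInt _ _ _ _ ha1 hb2 ha3 hb4)
  have hS3 := integral_split (fun ξ => f ξ - avg f z)
    (radial_eq ‖z‖ ‖ztil‖ ‖ζ‖ (theta z) (angFrom z ztil) ha1 hp1)
    (radial_null ‖z‖ ‖ztil‖ ‖ζ‖ (theta z) (angFrom z ztil) hz0 ha1)
    (measurableSet_polarRect _ _ _ _)
    (subInt _ _ _ _ le_rfl (le_trans hp1 hb2) le_rfl ha4)
    (subInt _ _ _ _ ha1 hb2 le_rfl ha4)
  have hBsub : Bsub z ztil ζ
      = polarRect ‖ztil‖ ‖ζ‖ (angFrom z ztil) (angFrom z ζ) := rfl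
  have hdecomp : (∫ ξ in Bsub z ztil ζ, (f ξ - avg f z) ∂dA)
      = (∫ ξ in polarRect ‖z‖ ‖ζ‖ (theta z) (angFrom z ζ), (f ξ - avg f z) ∂dA)
        - (∫ ξ in polarRect ‖z‖ ‖ztil‖ (theta z) (angFrom z ζ), (f ξ - avg f z) ∂dA)
        - (∫ ξ in polarRect ‖z‖ ‖ζ‖ (theta z) (angFrom z ztil), (f ξ - avg f z) ∂dA)
        + (∫ ξ in polarRect ‖z‖ ‖ztil‖ (theta z) (angFrom z ztil), (f ξ - avg f z) ∂dA) := by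
    rw [hBsub]
    linear_combination -hS1 - hS2 + hS3
  have k22 := key ‖ζ‖ (angFrom z ζ) hb1 hb2 hb3 hb4
  have k12 := key ‖ztil‖ (angFrom z ζ) ha1 ha2 hb3 hb4
  have k21 := key ‖ζ‖ (angFrom z ztil) hb1 hb2 ha3 ha4
  have k11 := key ‖ztil‖ (angFrom z ztil) ha1 ha2 ha3 ha4
  have hM : (0:ℝ) ≤ ((dA (Bz z)).toReal)⁻¹ := inv_nonneg.2 ENNReal.toReal_nonneg
  set A := ∫ ξ in polarRect ‖z‖ ‖ζ‖ (theta z) (angFrom z ζ), (f ξ - avg f z) ∂dA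
  set B := ∫ ξ in polarRect ‖z‖ ‖ztil‖ (theta z) (angFrom z ζ), (f ξ - avg f z) ∂dA
  set F := ∫ ξ in polarRect ‖z‖ ‖ζ‖ (theta z) (angFrom z ztil), (f ξ - avg f z) ∂dA
  set G := ∫ ξ in polarRect ‖z‖ ‖ztil‖ (theta z) (angFrom z ztil), (f ξ - avg f z) ∂dA
  have hnorm : ‖∫ ξ in Bsub z ztil ζ, (f ξ - avg f z) ∂dA‖ ≤ ‖A‖ + ‖B‖ + ‖F‖ + ‖G‖ := by
    rw [hdecomp]
    have n1 := norm_add_le (A - B - F) G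
    have n2 := norm_sub_le (A - B) F
    have n3 := norm_sub_le A B
    linarith
  calc ((dA (Bz z)).toReal)⁻¹ * ‖∫ ξ in Bsub z ztil ζ, (f ξ - avg f z) ∂dA‖
      ≤ ((dA (Bz z)).toReal)⁻¹ * (‖A‖ + ‖B‖ + ‖F‖ + ‖G‖) :=
        mul_le_mul_of_nonneg_left hnorm hM
    _ = ((dA (Bz z)).toReal)⁻¹ * ‖A‖ + ((dA (Bz z)).toReal)⁻¹ * ‖B‖
        + ((dA (Bz z)).toReal)⁻¹ * ‖F‖ + ((dA (Bz z)).toReal)⁻¹ * ‖G‖ := by ring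
    _ ≤ ε/4 + ε/4 + ε/4 + ε/4 := by
        exact add_le_add (add_le_add (add_le_add k22 k12) k21) k11
    _ = ε := by ring
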